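/- Fix an integer k₀ ≥ 1, a k₀ × k₀ matrix A with entries in {0,1}, θ ∈ (0,1), and a constant T₀ > 0. Then there exists a constant A₀ > 0, depending only on θ and T₀, with the following property. Let f, τ : Σ_A⁺ → ℝ satisfy |f(v) − f(v')| ≤ T₀ d_θ(v,v') and |τ(v) − τ(v')| ≤ T₀ d_θ(v,v') for all v, v' ∈ Σ_A⁺. Let b ∈ ℝ with |b| ≥ 1, let m ≥ 1 be an integer, let B > 0, let H : Σ_A⁺ → (0,∞), and let h : Σ_A⁺ → ℂ satisfy |h(v) − h(v')| ≤ B H(v') d_θ(v,v') whenever v₀ = v'₀. Then, for all u, u' ∈ Σ_A⁺ with u₀ = u'₀, |(L_{f − i b τ}^m h)(u) − (L_{f − i b τ}^m h)(u')| ≤ A₀ [ B θ^m (L_f^m H)(u') + |b| (L_f^m |h|)(u') ] · d_θ(u, u'). -/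

import Mathlib

def SigmaPlus {k₀ : ℕ} (A : Fin k₀ → Fin k₀ → Bool) : Set (ℕ → Fin k₀) :=
  {x | ∀ j, A (x j) (x (j + 1)) = true}

open Classical in
noncomputable def dtheta {k₀ : ℕ} (θ : ℝ) (x y : ℕ → Fin k₀) : ℝ :=
  if h : x = y then 0
  else θ ^ Nat.find (Function.ne_iff.mp h)

def consSeq {k₀ : ℕ} (i : Fin k₀) (x : ℕ → Fin k₀) : ℕ → Fin k₀ :=
  fun n => Nat.casesOn n i fun m => x m

noncomputable def RuelleC {k₀ : ℕ} (A : Fin k₀ → Fin k₀ → Bool)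
    (g : (ℕ → Fin k₀) → ℂ) (h : (ℕ → Fin k₀) → ℂ) : (ℕ → Fin k₀) → ℂ :=
  fun u => ∑ i : Fin k₀,
    if A i (u 0) = true then Complex.exp (g (consSeq i u)) * h (consSeq i u) else 0

noncomputable def RuelleR {k₀ : ℕ} (A : Fin k₀ → Fin k₀ → Bool)
    (g : (ℕ → Fin k₀) → ℝ) (h : (ℕ → Fin k₀) → ℝ) : (ℕ → Fin k₀) → ℝ :=
  fun u => ∑ i : Fin k₀,
    if A i (u 0) = true then Real.exp (g (consSeq i u)) * h (consSeq i u) else 0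

/- ### helper lemmas -/

lemma exp_lip (z w : ℂ) :
    ‖Complex.exp z - Complex.exp w‖ ≤
      Real.exp (max z.re w.re) * ‖z - w‖ := by
  have hconv : Convex ℝ {c : ℂ | c.re ≤ max z.re w.re} := convex_halfSpace_re_le _
  have := hconv.norm_image_sub_le_of_norm_deriv_le (f := Complex.exp)
    (fun x _ => Complex.differentiable_exp x)
    (fun x hx => by
      rw [Complex.deriv_exp, Complex.norm_exp]
      exact Real.exp_le_exp.2 hx)
    (x := w) (y := z) (Set.mem_setOf_eq ▸ le_max_right z.re w.re)
    (Set.mem_setOf_eq ▸ le_max_left z.re w.re)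
  simpa using this

lemma consSeq_injective {k₀ : ℕ} (i : Fin k₀) {x y : ℕ → Fin k₀}
    (h : consSeq i x = consSeq i y) : x = y := by
  funext n
  have := congrFun h (n + 1)
  simpa [consSeq] using this

open Classical in
lemma dtheta_cons {k₀ : ℕ} (θ : ℝ) (i : Fin k₀) (x y : ℕ → Fin k₀) :
    dtheta θ (consSeq i x) (consSeq i y) = θ * dtheta θ x y := by
  by_cases h : x = y
  · subst h; simp [dtheta]
  · have h2 : consSeq i x ≠ consSeq i y := fun hc => h (consSeq_injective i hc)
    rw [dtheta, dtheta, dif_neg h2, dif_neg h]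
    have hfind : Nat.find (Function.ne_iff.mp h2) = Nat.find (Function.ne_iff.mp h) + 1 := by
      rw [Nat.find_eq_iff]
      constructor
      · simpa [consSeq] using Nat.find_spec (Function.ne_iff.mp h)
      · intro n hn
        cases n with
        | zero => simp [consSeq]
        | succ k =>
          have hk : k < Nat.find (Function.ne_iff.mp h) := by omega
          have := Nat.find_min (Function.ne_iff.mp h) hk
          simpa [consSeq] using this
    rw [hfind, pow_succ]
    ring

lemma dtheta_nonneg {k₀ : ℕ} {θ : ℝ} (hθ : 0 ≤ θ) (x y : ℕ → Fin k₀) :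
    0 ≤ dtheta θ x y := by
  rw [dtheta]; split
  · exact le_refl 0
  · exact pow_nonneg hθ _

lemma dtheta_le_one {k₀ : ℕ} {θ : ℝ} (hθ0 : 0 ≤ θ) (hθ1 : θ ≤ 1) (x y : ℕ → Fin k₀) :
    dtheta θ x y ≤ 1 := by
  rw [dtheta]; split
  · exact zero_le_one
  · exact pow_le_one₀ hθ0 hθ1

lemma consSeq_mem {k₀ : ℕ} {A : Fin k₀ → Fin k₀ → Bool} {u : ℕ → Fin k₀}
    (hu : u ∈ SigmaPlus A) {i : Fin k₀} (hi : A i (u 0) = true) :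
    consSeq i u ∈ SigmaPlus A := by
  intro j
  cases j with
  | zero => exact hi
  | succ k => exact hu k

lemma RuelleR_mono_on {k₀ : ℕ} {A : Fin k₀ → Fin k₀ → Bool} (f : (ℕ → Fin k₀) → ℝ) :
    ∀ (m : ℕ) (g₁ g₂ : (ℕ → Fin k₀) → ℝ),
      (∀ v ∈ SigmaPlus A, g₁ v ≤ g₂ v) →
      ∀ u ∈ SigmaPlus A, (RuelleR A f)^[m] g₁ u ≤ (RuelleR A f)^[m] g₂ u := by
  intro m
  induction m with
  | zero => intro g₁ g₂ hg u hu; exact hg u hu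
  | succ m ih =>
    intro g₁ g₂ hg u hu
    rw [Function.iterate_succ_apply, Function.iterate_succ_apply]
    refine ih _ _ (fun v hv => ?_) u hu
    refine Finset.sum_le_sum fun i _ => ?_
    by_cases hA : A i (v 0) = true
    · rw [if_pos hA, if_pos hA]
      exact mul_le_mul_of_nonneg_left (hg _ (consSeq_mem hv hA)) (Real.exp_nonneg _)
    · rw [if_neg hA, if_neg hA]

lemma RuelleR_lin {k₀ : ℕ} {A : Fin k₀ → Fin k₀ → Bool} (f : (ℕ → Fin k₀) → ℝ)
    (a b : ℝ) :
    ∀ (m : ℕ) (p q : (ℕ → Fin k₀) → ℝ),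
      (RuelleR A f)^[m] (fun v => a * p v + b * q v) =
        fun u => a * (RuelleR A f)^[m] p u + b * (RuelleR A f)^[m] q u := by
  intro m
  induction m with
  | zero => intro p q; rfl
  | succ m ih =>
    intro p q
    have h1 : RuelleR A f (fun v => a * p v + b * q v) =
        fun u => a * RuelleR A f p u + b * RuelleR A f q u := by
      funext u
      simp only [RuelleR, Finset.mul_sum, ← Finset.sum_add_distrib]
      refine Finset.sum_congr rfl fun i _ => ?_
      split <;> ring
    rw [Function.iterate_succ_apply, Function.iterate_succ_apply,
      Function.iterate_succ_apply, h1, ih]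

lemma RuelleR_nonneg_on {k₀ : ℕ} {A : Fin k₀ → Fin k₀ → Bool} (f : (ℕ → Fin k₀) → ℝ)
    (m : ℕ) (g : (ℕ → Fin k₀) → ℝ) (hg : ∀ v ∈ SigmaPlus A, 0 ≤ g v) :
    ∀ u ∈ SigmaPlus A, 0 ≤ (RuelleR A f)^[m] g u := by
  intro u hu
  have h0 : (RuelleR A f)^[m] (fun _ => (0:ℝ)) = fun _ => (0:ℝ) := by
    apply Function.iterate_fixed
    funext v
    simp [RuelleR]
  have := RuelleR_mono_on (A := A) f m (fun _ => 0) g hg u hu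
  rw [h0] at this
  exact this

lemma RuelleC_abs_le {k₀ : ℕ} {A : Fin k₀ → Fin k₀ → Bool} {f : (ℕ → Fin k₀) → ℝ}
    {g : (ℕ → Fin k₀) → ℂ} (hre : ∀ v, (g v).re = f v) (h : (ℕ → Fin k₀) → ℂ)
    (u : ℕ → Fin k₀) :
    ‖RuelleC A g h u‖ ≤
      RuelleR A f (fun v => ‖h v‖) u := by
  refine le_trans (norm_sum_le _ _) (Finset.sum_le_sum fun i _ => ?_)
  by_cases hA : A i (u 0) = true
  · rw [if_pos hA, if_pos hA, norm_mul, Complex.norm_exp, hre]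
  · simp [hA]


lemma step {k₀ : ℕ} (A : Fin k₀ → Fin k₀ → Bool) {θ T₀ : ℝ}
    (hθ0 : 0 < θ) (hθ1 : θ < 1) (hT₀ : 0 < T₀)
    (f τ : (ℕ → Fin k₀) → ℝ)
    (hf : ∀ v ∈ SigmaPlus A, ∀ v' ∈ SigmaPlus A, |f v - f v'| ≤ T₀ * dtheta θ v v')
    (hτ : ∀ v ∈ SigmaPlus A, ∀ v' ∈ SigmaPlus A, |τ v - τ v'| ≤ T₀ * dtheta θ v v')
    (b : ℝ) (hb : 1 ≤ |b|)
    (h : (ℕ → Fin k₀) → ℂ) (H : (ℕ → Fin k₀) → ℝ)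
    (hh : ∀ v ∈ SigmaPlus A, ∀ v' ∈ SigmaPlus A, v 0 = v' 0 →
      ‖h v - h v'‖ ≤ H v' * (dtheta θ v v' *
        Real.exp (T₀ * θ / (1 - θ) * dtheta θ v v'))) :
    ∀ v ∈ SigmaPlus A, ∀ v' ∈ SigmaPlus A, v 0 = v' 0 →
      ‖RuelleC A (fun v => (f v : ℂ) - Complex.I * (b : ℂ) * (τ v : ℂ)) h v
            - RuelleC A (fun v => (f v : ℂ) - Complex.I * (b : ℂ) * (τ v : ℂ)) h v'‖
        ≤ (θ * RuelleR A f H v'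
            + 2 * T₀ * |b| * θ * RuelleR A f (fun w => ‖h w‖) v')
          * (dtheta θ v v' * Real.exp (T₀ * θ / (1 - θ) * dtheta θ v v')) := by
  intro v hv v' hv' h0
  set g : (ℕ → Fin k₀) → ℂ := fun v => (f v : ℂ) - Complex.I * (b : ℂ) * (τ v : ℂ) with hg
  set CC : ℝ := T₀ * θ / (1 - θ) with hCC
  set d : ℝ := dtheta θ v v' with hd
  have hθ1' : (0:ℝ) < 1 - θ := by linarith
  have hd0 : 0 ≤ d := dtheta_nonneg hθ0.le v v'
  have hC0 : 0 ≤ CC := by positivity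
  have hTC : T₀ * θ ≤ CC := by
    rw [hCC, le_div_iff₀ hθ1']
    nlinarith [mul_nonneg (mul_nonneg hT₀.le hθ0.le) hθ0.le]
  have hb0 : (0:ℝ) < |b| := lt_of_lt_of_le one_pos hb
  have hexp1 : Real.exp (T₀ * (θ * d)) * Real.exp (CC * (θ * d)) = Real.exp (CC * d) := by
    rw [← Real.exp_add]
    congr 1
    have hCid : T₀ * θ + CC * θ = CC := by
      rw [hCC]; field_simp; ring
    linear_combination d * hCid
  have hexp2 : Real.exp (T₀ * (θ * d)) * d ≤ d * Real.exp (CC * d) := by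
    have h1 : T₀ * (θ * d) ≤ CC * d := by nlinarith [mul_le_mul_of_nonneg_right hTC hd0]
    calc Real.exp (T₀ * (θ * d)) * d ≤ Real.exp (CC * d) * d :=
          mul_le_mul_of_nonneg_right (Real.exp_le_exp.2 h1) hd0
      _ = d * Real.exp (CC * d) := by ring
  have hreg : ∀ x, (g x).re = f x := by
    intro x
    simp [hg, Complex.sub_re, Complex.mul_re, Complex.I_re, Complex.I_im,
      Complex.ofReal_re, Complex.ofReal_im, Complex.mul_im]
  -- per-index bound
  have hterm : ∀ i : Fin k₀,
      ‖(if A i (v 0) = true then Complex.exp (g (consSeq i v)) * h (consSeq i v) else 0)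
          - (if A i (v 0) = true then Complex.exp (g (consSeq i v')) * h (consSeq i v') else 0)‖
      ≤ (if A i (v 0) = true then
          Real.exp (f (consSeq i v')) *
            (H (consSeq i v') * (θ * (d * Real.exp (CC * d)))
              + ‖h (consSeq i v')‖ * (2 * T₀ * |b| * θ * (d * Real.exp (CC * d))))
        else 0) := by
    intro i
    by_cases hA : A i (v 0) = true
    · rw [if_pos hA, if_pos hA, if_pos hA]
      set w : ℕ → Fin k₀ := consSeq i v with hwdef
      set w' : ℕ → Fin k₀ := consSeq i v' with hw'def
      have hw : w ∈ SigmaPlus A := consSeq_mem hv hA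
      have hw' : w' ∈ SigmaPlus A := consSeq_mem hv' (h0 ▸ hA)
      have hdw : dtheta θ w w' = θ * d := dtheta_cons θ i v v'
      have hfw : |f w - f w'| ≤ T₀ * (θ * d) := by
        have := hf w hw w' hw'; rw [hdw] at this; linarith
      have hτw : |τ w - τ w'| ≤ T₀ * (θ * d) := by
        have := hτ w hw w' hw'; rw [hdw] at this; linarith
      have hhw : ‖h w - h w'‖ ≤
          H w' * ((θ * d) * Real.exp (CC * (θ * d))) := by
        have := hh w hw w' hw' rfl; rwa [hdw] at this
      have hfw2 : f w ≤ f w' + T₀ * (θ * d) := by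
        have := (abs_le.mp hfw).2; linarith
      have hgd : ‖g w - g w'‖ ≤ 2 * |b| * (T₀ * (θ * d)) := by
        have heq : g w - g w' = ((f w - f w' : ℝ) : ℂ)
            - Complex.I * (b : ℂ) * ((τ w - τ w' : ℝ) : ℂ) := by
          simp only [hg, Complex.ofReal_sub]; ring
        rw [heq]
        refine le_trans (norm_sub_le _ _) ?_
        have h1 : ‖((f w - f w' : ℝ) : ℂ)‖ = |f w - f w'| := by
          rw [Complex.norm_real, Real.norm_eq_abs]
        have h2 : ‖Complex.I * (b : ℂ) * ((τ w - τ w' : ℝ) : ℂ)‖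
            = |b| * |τ w - τ w'| := by
          rw [norm_mul, norm_mul, Complex.norm_I, one_mul, Complex.norm_real, Real.norm_eq_abs,
            Complex.norm_real, Real.norm_eq_abs]
        rw [h1, h2]
        have h3 : |f w - f w'| + |b| * |τ w - τ w'|
            ≤ T₀ * (θ * d) + |b| * (T₀ * (θ * d)) := by
          have := mul_le_mul_of_nonneg_left hτw hb0.le
          linarith
        refine le_trans h3 ?_
        have hx : 0 ≤ T₀ * (θ * d) := by positivity
        nlinarith [mul_le_mul_of_nonneg_right hb hx]
      have hsplit : Complex.exp (g w) * h w - Complex.exp (g w') * h w' =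
          Complex.exp (g w) * (h w - h w')
            + (Complex.exp (g w) - Complex.exp (g w')) * h w' := by ring
      rw [hsplit]
      refine le_trans (norm_add_le _ _) ?_
      have t1 : ‖Complex.exp (g w) * (h w - h w')‖
          ≤ Real.exp (f w') * (H w' * (θ * (d * Real.exp (CC * d)))) := by
        rw [norm_mul, Complex.norm_exp, hreg]
        have hH0 : 0 ≤ H w' * ((θ * d) * Real.exp (CC * (θ * d))) :=
          le_trans (norm_nonneg _) hhw
        calc Real.exp (f w) * ‖h w - h w'‖
            ≤ (Real.exp (T₀ * (θ * d)) * Real.exp (f w'))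
              * (H w' * ((θ * d) * Real.exp (CC * (θ * d)))) := by
              refine mul_le_mul ?_ hhw (norm_nonneg _) (by positivity)
              rw [← Real.exp_add]
              exact Real.exp_le_exp.2 (by linarith)
          _ = Real.exp (f w') * (H w' * (θ * (d * Real.exp (CC * d)))) := by
              linear_combination (Real.exp (f w') * H w' * θ * d) * hexp1
      have t2 : ‖(Complex.exp (g w) - Complex.exp (g w')) * h w'‖
          ≤ Real.exp (f w')
            * (‖h w'‖ * (2 * T₀ * |b| * θ * (d * Real.exp (CC * d)))) := by
        rw [norm_mul]
        have hm : max (g w).re (g w').re ≤ f w' + T₀ * (θ * d) := by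
          rw [hreg, hreg]
          refine max_le hfw2 ?_
          nlinarith [mul_nonneg hT₀.le (mul_nonneg hθ0.le hd0)]
        have base2 : Real.exp (T₀ * (θ * d)) * (2 * |b| * (T₀ * (θ * d)))
            ≤ 2 * T₀ * |b| * θ * (d * Real.exp (CC * d)) := by
          calc Real.exp (T₀ * (θ * d)) * (2 * |b| * (T₀ * (θ * d)))
              = (2 * |b| * (T₀ * θ)) * (Real.exp (T₀ * (θ * d)) * d) := by ring
            _ ≤ (2 * |b| * (T₀ * θ)) * (d * Real.exp (CC * d)) :=
                mul_le_mul_of_nonneg_left hexp2 (by positivity)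
            _ = 2 * T₀ * |b| * θ * (d * Real.exp (CC * d)) := by ring
        calc ‖Complex.exp (g w) - Complex.exp (g w')‖ * ‖h w'‖
            ≤ (Real.exp (f w' + T₀ * (θ * d)) * (2 * |b| * (T₀ * (θ * d))))
              * ‖h w'‖ := by
              refine mul_le_mul_of_nonneg_right ?_ (norm_nonneg _)
              refine le_trans (exp_lip _ _) ?_
              exact mul_le_mul (Real.exp_le_exp.2 hm) hgd (norm_nonneg _)
                (Real.exp_nonneg _)
          _ = Real.exp (f w') * (Real.exp (T₀ * (θ * d)) * (2 * |b| * (T₀ * (θ * d))))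
              * ‖h w'‖ := by rw [Real.exp_add]; ring
          _ ≤ Real.exp (f w') * (2 * T₀ * |b| * θ * (d * Real.exp (CC * d)))
              * ‖h w'‖ :=
              mul_le_mul_of_nonneg_right
                (mul_le_mul_of_nonneg_left base2 (Real.exp_nonneg _))
                (norm_nonneg _)
          _ = Real.exp (f w')
              * (‖h w'‖ * (2 * T₀ * |b| * θ * (d * Real.exp (CC * d)))) := by
              ring
      calc ‖Complex.exp (g w) * (h w - h w')‖
            + ‖(Complex.exp (g w) - Complex.exp (g w')) * h w'‖
          ≤ Real.exp (f w') * (H w' * (θ * (d * Real.exp (CC * d))))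
            + Real.exp (f w')
              * (‖h w'‖ * (2 * T₀ * |b| * θ * (d * Real.exp (CC * d)))) :=
            add_le_add t1 t2
        _ = Real.exp (f w') *
            (H w' * (θ * (d * Real.exp (CC * d)))
              + ‖h w'‖ * (2 * T₀ * |b| * θ * (d * Real.exp (CC * d)))) := by
            ring
    · rw [if_neg hA, if_neg hA, if_neg hA]; simp
  -- assemble
  have hsum : RuelleC A g h v - RuelleC A g h v' =
      ∑ i : Fin k₀,
        ((if A i (v 0) = true then Complex.exp (g (consSeq i v)) * h (consSeq i v) else 0)
          - (if A i (v 0) = true then Complex.exp (g (consSeq i v')) * h (consSeq i v') else 0)) := by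
    rw [Finset.sum_sub_distrib]
    simp only [RuelleC, ← h0]
  rw [hsum]
  refine le_trans (norm_sum_le _ _) (le_trans (Finset.sum_le_sum fun i _ => hterm i) ?_)
  have hrhs : (θ * RuelleR A f H v'
        + 2 * T₀ * |b| * θ * RuelleR A f (fun w => ‖h w‖) v')
      * (d * Real.exp (CC * d))
      = ∑ i : Fin k₀,
        (if A i (v 0) = true then
          Real.exp (f (consSeq i v')) *
            (H (consSeq i v') * (θ * (d * Real.exp (CC * d)))
              + ‖h (consSeq i v')‖ * (2 * T₀ * |b| * θ * (d * Real.exp (CC * d))))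
        else 0) := by
    simp only [RuelleR, ← h0]
    rw [Finset.mul_sum, Finset.mul_sum, add_mul, Finset.sum_mul, Finset.sum_mul,
      ← Finset.sum_add_distrib]
    refine Finset.sum_congr rfl fun i _ => ?_
    split <;> ring
  rw [hrhs]

lemma RuelleR_smul {k₀ : ℕ} {A : Fin k₀ → Fin k₀ → Bool} (f : (ℕ → Fin k₀) → ℝ)
    (a : ℝ) (m : ℕ) (p : (ℕ → Fin k₀) → ℝ) :
    (RuelleR A f)^[m] (fun v => a * p v) = fun u => a * (RuelleR A f)^[m] p u := by
  have := RuelleR_lin (A := A) f a 0 m p p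
  have e1 : (fun v => a * p v + 0 * p v) = fun v => a * p v := by funext v; ring
  have e2 : (fun u => a * (RuelleR A f)^[m] p u + 0 * (RuelleR A f)^[m] p u)
      = fun u => a * (RuelleR A f)^[m] p u := by funext u; ring
  rw [e1, e2] at this
  exact this

lemma key {k₀ : ℕ} (A : Fin k₀ → Fin k₀ → Bool) {θ T₀ : ℝ}
    (hθ0 : 0 < θ) (hθ1 : θ < 1) (hT₀ : 0 < T₀)
    (f τ : (ℕ → Fin k₀) → ℝ)
    (hf : ∀ v ∈ SigmaPlus A, ∀ v' ∈ SigmaPlus A, |f v - f v'| ≤ T₀ * dtheta θ v v')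
    (hτ : ∀ v ∈ SigmaPlus A, ∀ v' ∈ SigmaPlus A, |τ v - τ v'| ≤ T₀ * dtheta θ v v')
    (b : ℝ) (hb : 1 ≤ |b|) :
    ∀ (m : ℕ) (h : (ℕ → Fin k₀) → ℂ) (H : (ℕ → Fin k₀) → ℝ),
      (∀ v ∈ SigmaPlus A, 0 ≤ H v) →
      (∀ v ∈ SigmaPlus A, ∀ v' ∈ SigmaPlus A, v 0 = v' 0 →
        ‖h v - h v'‖ ≤ H v' * (dtheta θ v v' *
          Real.exp (T₀ * θ / (1 - θ) * dtheta θ v v'))) →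
      ∀ u ∈ SigmaPlus A, ∀ u' ∈ SigmaPlus A, u 0 = u' 0 →
        ‖(RuelleC A (fun v => (f v : ℂ) - Complex.I * (b : ℂ) * (τ v : ℂ)))^[m] h u
              - (RuelleC A (fun v => (f v : ℂ) - Complex.I * (b : ℂ) * (τ v : ℂ)))^[m] h u'‖
          ≤ (θ ^ m * ((RuelleR A f)^[m] H u')
              + 2 * T₀ * |b| * (∑ j ∈ Finset.range m, θ ^ (j + 1)) *
                ((RuelleR A f)^[m] (fun w => ‖h w‖) u'))
            * (dtheta θ u u' * Real.exp (T₀ * θ / (1 - θ) * dtheta θ u u')) := by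
  intro m
  induction m with
  | zero =>
    intro h H hH hhyp u hu u' hu' h0
    simp only [Function.iterate_zero_apply, pow_zero, Finset.range_zero, Finset.sum_empty,
      mul_zero, zero_mul, add_zero, one_mul]
    exact hhyp u hu u' hu' h0
  | succ m ih =>
    intro h H hH hhyp u hu u' hu' h0
    set g : (ℕ → Fin k₀) → ℂ := fun v => (f v : ℂ) - Complex.I * (b : ℂ) * (τ v : ℂ) with hg
    have hreg : ∀ x, (g x).re = f x := by
      intro x
      simp [hg, Complex.sub_re, Complex.mul_re, Complex.I_re, Complex.I_im,
        Complex.ofReal_re, Complex.ofReal_im, Complex.mul_im]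
    set H' : (ℕ → Fin k₀) → ℝ := fun w => θ * RuelleR A f H w
        + 2 * T₀ * |b| * θ * RuelleR A f (fun x => ‖h x‖) w with hH'
    have hb0 : (0:ℝ) < |b| := lt_of_lt_of_le one_pos hb
    have hH'0 : ∀ v ∈ SigmaPlus A, 0 ≤ H' v := by
      intro v hv
      have n1 := RuelleR_nonneg_on (A := A) f 1 H hH v hv
      have n2 := RuelleR_nonneg_on (A := A) f 1 (fun x => ‖h x‖)
        (fun x _ => norm_nonneg _) v hv
      rw [Function.iterate_one] at n1 n2
      have c0 : (0:ℝ) ≤ 2 * T₀ * |b| * θ := by positivity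
      exact add_nonneg (mul_nonneg hθ0.le n1) (mul_nonneg c0 n2)
    have hstep := step A hθ0 hθ1 hT₀ f τ hf hτ b hb h H hhyp
    have ihh := ih (RuelleC A g h) H' hH'0
      (fun v hv v' hv' h0 => hstep v hv v' hv' h0) u hu u' hu' h0
    rw [Function.iterate_succ_apply, Function.iterate_succ_apply]
    refine le_trans ihh ?_
    -- rewrite L^[m] H'
    have hlin : (RuelleR A f)^[m] H' u'
        = θ * (RuelleR A f)^[m + 1] H u'
          + 2 * T₀ * |b| * θ * (RuelleR A f)^[m + 1]
              (fun x => ‖h x‖) u' := by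
      have := RuelleR_lin (A := A) f θ (2 * T₀ * |b| * θ) m
        (RuelleR A f H) (RuelleR A f (fun x => ‖h x‖))
      rw [hH']
      rw [show ((RuelleR A f)^[m] fun w => θ * RuelleR A f H w
          + 2 * T₀ * |b| * θ * RuelleR A f (fun x => ‖h x‖) w)
          = (RuelleR A f)^[m] (fun w => θ * (RuelleR A f H) w
            + 2 * T₀ * |b| * θ * (RuelleR A f (fun x => ‖h x‖)) w) from rfl,
        this, Function.iterate_succ_apply, Function.iterate_succ_apply]
    have hmono : (RuelleR A f)^[m] (fun x => ‖RuelleC A g h x‖) u'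
        ≤ (RuelleR A f)^[m + 1] (fun x => ‖h x‖) u' := by
      rw [Function.iterate_succ_apply]
      exact RuelleR_mono_on (A := A) f m _ _
        (fun x _ => RuelleC_abs_le hreg h x) u' hu'
    rw [hlin]
    -- arithmetic
    set X := (RuelleR A f)^[m + 1] H u' with hX
    set Y := (RuelleR A f)^[m + 1] (fun x => ‖h x‖) u' with hY
    set Z := (RuelleR A f)^[m] (fun x => ‖RuelleC A g h x‖) u' with hZ
    have hZ0 : 0 ≤ Z := RuelleR_nonneg_on (A := A) f m _
      (fun x _ => norm_nonneg _) u' hu'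
    have hcm0 : 0 ≤ ∑ j ∈ Finset.range m, θ ^ (j + 1) :=
      Finset.sum_nonneg fun j _ => by positivity
    have hψ0 : 0 ≤ dtheta θ u u' * Real.exp (T₀ * θ / (1 - θ) * dtheta θ u u') := by
      have := dtheta_nonneg (k₀ := k₀) hθ0.le u u'
      positivity
    refine mul_le_mul_of_nonneg_right ?_ hψ0
    rw [Finset.sum_range_succ]
    have hdiff : 2 * T₀ * |b| * (∑ j ∈ Finset.range m, θ ^ (j + 1)) * Z
        ≤ 2 * T₀ * |b| * (∑ j ∈ Finset.range m, θ ^ (j + 1)) * Y :=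
      mul_le_mul_of_nonneg_left hmono (by positivity)
    have expand : θ ^ m * (θ * X + 2 * T₀ * |b| * θ * Y)
        = θ ^ (m + 1) * X + 2 * T₀ * |b| * θ ^ (m + 1) * Y := by
      rw [pow_succ]; ring
    have expand2 : 2 * T₀ * |b| * ((∑ j ∈ Finset.range m, θ ^ (j + 1)) + θ ^ (m + 1)) * Y
        = 2 * T₀ * |b| * (∑ j ∈ Finset.range m, θ ^ (j + 1)) * Y
          + 2 * T₀ * |b| * θ ^ (m + 1) * Y := by ring
    have hXe : (RuelleR A f)^[m] (RuelleR A f H) u' = X := by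
      rw [hX, Function.iterate_succ_apply]
    have hYe : (RuelleR A f)^[m] (RuelleR A f (fun x => ‖h x‖)) u' = Y := by
      rw [hY, Function.iterate_succ_apply]
    rw [hXe]
    linarith [hdiff, expand, expand2]

/-- Lemma 4.2 (Lasota–Yorke type inequality) in the symbolic model. -/
theorem stmt_5 {k₀ : ℕ} (hk : 1 ≤ k₀) (A : Fin k₀ → Fin k₀ → Bool)
    (θ : ℝ) (hθ0 : 0 < θ) (hθ1 : θ < 1) (T₀ : ℝ) (hT₀ : 0 < T₀) :
    ∃ A₀ : ℝ, 0 < A₀ ∧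
      ∀ f τ : (ℕ → Fin k₀) → ℝ,
        (∀ v ∈ SigmaPlus A, ∀ v' ∈ SigmaPlus A, |f v - f v'| ≤ T₀ * dtheta θ v v') →
        (∀ v ∈ SigmaPlus A, ∀ v' ∈ SigmaPlus A, |τ v - τ v'| ≤ T₀ * dtheta θ v v') →
        ∀ b : ℝ, 1 ≤ |b| →
        ∀ m : ℕ, 1 ≤ m →
        ∀ B : ℝ, 0 < B →
        ∀ H : (ℕ → Fin k₀) → ℝ, (∀ v ∈ SigmaPlus A, 0 < H v) →
        ∀ h : (ℕ → Fin k₀) → ℂ,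
          (∀ v ∈ SigmaPlus A, ∀ v' ∈ SigmaPlus A, v 0 = v' 0 →
            ‖h v - h v'‖ ≤ B * H v' * dtheta θ v v') →
        ∀ u ∈ SigmaPlus A, ∀ u' ∈ SigmaPlus A, u 0 = u' 0 →
          ‖(RuelleC A (fun v => (f v : ℂ) - Complex.I * (b : ℂ) * (τ v : ℂ)))^[m] h u
                - (RuelleC A (fun v => (f v : ℂ) - Complex.I * (b : ℂ) * (τ v : ℂ)))^[m] h u'‖
            ≤ A₀ * (B * θ ^ m * ((RuelleR A f)^[m] H u')
                  + |b| * ((RuelleR A f)^[m] (fun v => ‖h v‖) u'))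
              * dtheta θ u u' := by
  have hθ1' : (0:ℝ) < 1 - θ := by linarith
  refine ⟨Real.exp (T₀ * θ / (1 - θ)) * (1 + 2 * T₀ / (1 - θ)), by positivity, ?_⟩
  intro f τ hf hτ b hb m hm B hB H hH h hh u hu u' hu' h0
  have hC0 : (0:ℝ) ≤ T₀ * θ / (1 - θ) := by positivity
  have hd0 : 0 ≤ dtheta θ u u' := dtheta_nonneg hθ0.le u u'
  have hd1 : dtheta θ u u' ≤ 1 := dtheta_le_one hθ0.le hθ1.le u u'
  have hb0 : (0:ℝ) < |b| := lt_of_lt_of_le one_pos hb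
  have hkey := key A hθ0 hθ1 hT₀ f τ hf hτ b hb m h (fun v => B * H v)
    (fun v hv => mul_nonneg hB.le (hH v hv).le)
    (fun v hv v' hv' h0' => by
      refine le_trans (hh v hv v' hv' h0') ?_
      have hd0' : 0 ≤ dtheta θ v v' := dtheta_nonneg hθ0.le v v'
      have he1 : (1:ℝ) ≤ Real.exp (T₀ * θ / (1 - θ) * dtheta θ v v') :=
        Real.one_le_exp (by positivity)
      have hBH : 0 ≤ B * H v' := mul_nonneg hB.le (hH v' hv').le
      calc B * H v' * dtheta θ v v'
          ≤ B * H v' * (dtheta θ v v' * Real.exp (T₀ * θ / (1 - θ) * dtheta θ v v')) := by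
            refine mul_le_mul_of_nonneg_left ?_ hBH
            exact le_mul_of_one_le_right hd0' he1
        _ = (fun v => B * H v) v' * (dtheta θ v v' *
              Real.exp (T₀ * θ / (1 - θ) * dtheta θ v v')) := rfl)
    u hu u' hu' h0
  have hsm := RuelleR_smul (A := A) f B m H
  rw [hsm] at hkey
  refine le_trans hkey ?_
  set X := (RuelleR A f)^[m] H u' with hXd
  set Y := (RuelleR A f)^[m] (fun v => ‖h v‖) u' with hYd
  set cm := ∑ j ∈ Finset.range m, θ ^ (j + 1) with hcmd
  set d := dtheta θ u u' with hdd
  set CC := T₀ * θ / (1 - θ) with hCCd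
  have hX0 : 0 ≤ X := RuelleR_nonneg_on (A := A) f m H (fun v hv => (hH v hv).le) u' hu'
  have hY0 : 0 ≤ Y := RuelleR_nonneg_on (A := A) f m _
    (fun v _ => norm_nonneg _) u' hu'
  have hcm0 : 0 ≤ cm := Finset.sum_nonneg fun j _ => by positivity
  have hcm : cm ≤ 1 / (1 - θ) := by
    have h1 : cm = θ * ∑ j ∈ Finset.range m, θ ^ j := by
      rw [Finset.mul_sum]
      exact Finset.sum_congr rfl fun j _ => by rw [pow_succ]; ring
    have h2 : ∑ j ∈ Finset.range m, θ ^ j ≤ 1 / (1 - θ) := by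
      rw [geom_sum_eq (ne_of_lt hθ1)]
      have e : (θ ^ m - 1) / (θ - 1) = (1 - θ ^ m) / (1 - θ) := by
        rw [div_eq_div_iff (by linarith) (by linarith)]; ring
      rw [e, div_le_div_iff₀ hθ1' hθ1']
      nlinarith [pow_nonneg hθ0.le m]
    calc cm = θ * ∑ j ∈ Finset.range m, θ ^ j := h1
      _ ≤ θ * (1 / (1 - θ)) := mul_le_mul_of_nonneg_left h2 hθ0.le
      _ ≤ 1 * (1 / (1 - θ)) := by
          refine mul_le_mul_of_nonneg_right hθ1.le (by positivity)
      _ = 1 / (1 - θ) := one_mul _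
  have hde : Real.exp (CC * d) ≤ Real.exp CC := by
    refine Real.exp_le_exp.2 ?_
    calc CC * d ≤ CC * 1 := mul_le_mul_of_nonneg_left hd1 hC0
      _ = CC := mul_one _
  have hP0 : 0 ≤ θ ^ m * (B * X) + 2 * T₀ * |b| * cm * Y := by positivity
  have hPQ : θ ^ m * (B * X) + 2 * T₀ * |b| * cm * Y
      ≤ (1 + 2 * T₀ / (1 - θ)) * (B * θ ^ m * X + |b| * Y) := by
    have w1 : 0 ≤ B * θ ^ m * X := by positivity
    have w2 : 0 ≤ |b| * Y := mul_nonneg hb0.le hY0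
    have hK0 : 0 ≤ 2 * T₀ / (1 - θ) := by positivity
    have t2 : 2 * T₀ * cm ≤ 2 * T₀ / (1 - θ) := by
      calc 2 * T₀ * cm ≤ 2 * T₀ * (1 / (1 - θ)) :=
            mul_le_mul_of_nonneg_left hcm (by positivity)
        _ = 2 * T₀ / (1 - θ) := by ring
    have t2' : 2 * T₀ * |b| * cm * Y ≤ (2 * T₀ / (1 - θ)) * (|b| * Y) := by
      calc 2 * T₀ * |b| * cm * Y = (2 * T₀ * cm) * (|b| * Y) := by ring
        _ ≤ (2 * T₀ / (1 - θ)) * (|b| * Y) := mul_le_mul_of_nonneg_right t2 w2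
    nlinarith [t2', w1, w2, hK0]
  calc (θ ^ m * (B * X) + 2 * T₀ * |b| * cm * Y) * (d * Real.exp (CC * d))
      ≤ (θ ^ m * (B * X) + 2 * T₀ * |b| * cm * Y) * (d * Real.exp CC) := by
        refine mul_le_mul_of_nonneg_left (mul_le_mul_of_nonneg_left hde hd0) hP0
    _ = Real.exp CC * (θ ^ m * (B * X) + 2 * T₀ * |b| * cm * Y) * d := by ring
    _ ≤ Real.exp CC * ((1 + 2 * T₀ / (1 - θ)) * (B * θ ^ m * X + |b| * Y)) * d := by
        refine mul_le_mul_of_nonneg_right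
          (mul_le_mul_of_nonneg_left hPQ (Real.exp_nonneg _)) hd0
    _ = Real.exp CC * (1 + 2 * T₀ / (1 - θ)) * (B * θ ^ m * X + |b| * Y) * d := by ring
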